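/- arXiv:2602.14717 — 2 statements merged into one kernel-verified Lean document; each statement's English description precedes it below -/
import Mathlib

section
/- The abstract accuracy transformer is sound: given n prediction/label pairs, where for each t the predicted Boolean yₜ' lies in the Boolean interval ŷₜ = (lₜ, uₜ), and the ground truth labels yₜ are concrete Booleans, then (1/n)·Σₜ 𝟙[yₜ' = yₜ] lies in the real interval [(1/n)·Σₜ mₜ, (1/n)·Σₜ Mₜ], where [mₜ, Mₜ] is defined as [1,1] if lₜ = uₜ = yₜ, [0,0] if lₜ = uₜ ≠ yₜ, and [0,1] if lₜ ≠ uₜ. -/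
/-- Soundness of the abstract accuracy transformer: the concrete accuracy lies
in the interval obtained by summing per-example abstract indicator intervals. -/
theorem abstract_accuracy_sound (n : ℕ) (hn : 0 < n)
    (y' y l u : Fin n → Bool)
    (hlu : ∀ t, l t ≤ u t)
    (hl : ∀ t, l t ≤ y' t) (hu : ∀ t, y' t ≤ u t) :
    (1 / (n : ℝ)) * ∑ t, (if l t = u t then (if l t = y t then (1 : ℝ) else 0) else 0)
      ≤ (1 / (n : ℝ)) * ∑ t, (if y' t = y t then (1 : ℝ) else 0) ∧
    (1 / (n : ℝ)) * ∑ t, (if y' t = y t then (1 : ℝ) else 0)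
      ≤ (1 / (n : ℝ)) * ∑ t, (if l t = u t then (if l t = y t then (1 : ℝ) else 0) else 1) := by
  have hc : (0:ℝ) ≤ 1 / (n:ℝ) := by positivity
  have key : ∀ t : Fin n, l t = u t → y' t = l t := by
    intro t h
    have h1 := hl t
    have h2 := hu t
    rw [← h] at h2
    exact le_antisymm h2 h1
  constructor
  · apply mul_le_mul_of_nonneg_left _ hc
    apply Finset.sum_le_sum
    intro t _
    by_cases h : l t = u t
    · have := key t h
      simp [h, this]
    · simp [h]
      split <;> norm_num
  · apply mul_le_mul_of_nonneg_left _ hc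
    apply Finset.sum_le_sum
    intro t _
    by_cases h : l t = u t
    · have := key t h
      simp [h, this]
    · simp [h]
      split <;> norm_num
end

section
/- Suppose a search maintains a finite collection h of abstract nodes, each node p̂ with a set γ(p̂) of concrete programs and bounds ν(p̂) ≤ φ(p) ≤ μ(p̂) for all p ∈ γ(p̂), such that the union of γ(p̂) over p̂ ∈ h equals the full (nonempty) set of programs P. If max over p̂ ∈ h of μ(p̂) minus max over p̂ ∈ h of ν(p̂) is at most ε, then for the node p̂* maximizing ν, every p ∈ γ(p̂*) satisfies sup_{p' ∈ P} φ(p') − φ(p) ≤ ε (i.e., p is ε-optimal). -/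
/-- ε-optimality at termination of the A* search: if the frontier `h` covers
all programs, each node's bounds are valid, and the gap between the greatest
upper bound and greatest lower bound over the frontier is at most `ε`, then
every concrete program in the node maximizing the lower bound `ν` is
`ε`-optimal. -/
theorem astar_epsilon_optimal
    {Prog Node : Type*} [Nonempty Prog]
    (γ : Node → Set Prog) (φ : Prog → ℝ) (μ ν : Node → ℝ)
    (h : Finset Node) (hne : h.Nonempty)
    (hbounds : ∀ q ∈ h, ∀ p ∈ γ q, ν q ≤ φ p ∧ φ p ≤ μ q)
    (hcover : (⋃ q ∈ h, γ q) = Set.univ)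
    (ε : ℝ) (hε : 0 ≤ ε)
    (hgap : h.sup' hne μ - h.sup' hne ν ≤ ε)
    (pstar : Node) (hpstar : pstar ∈ h)
    (hmax : ∀ q ∈ h, ν q ≤ ν pstar) :
    ∀ p ∈ γ pstar, ∀ p' : Prog, φ p' - φ p ≤ ε := by
  intro p hp p'
  obtain ⟨q, hq, hq'⟩ : ∃ q ∈ h, p' ∈ γ q := by
    have : p' ∈ (⋃ q ∈ h, γ q) := hcover ▸ Set.mem_univ p'
    simpa using this
  have h1 : φ p' ≤ μ q := (hbounds q hq p' hq').2
  have h2 : μ q ≤ h.sup' hne μ := Finset.le_sup' μ hq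
  have h3 : h.sup' hne ν ≤ ν pstar := Finset.sup'_le hne ν hmax
  have h4 : ν pstar ≤ φ p := (hbounds pstar hpstar p hp).1
  linarith
end
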